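/- arXiv:1404.0825 — 4 statements merged into one kernel-verified Lean document; each statement's English description precedes it below -/
import Mathlib

section
/- Let ψ ∈ H¹(ℝ^{3N}) with ‖ψ‖_{L²} = 1, and define ρ_ψ(x) = N ∫ |ψ(x, x₂,…,x_N)|² dx₂…dx_N and jᵖ_ψ(x) = N Im ∫ conj(ψ) ∇ₓψ dx₂…dx_N. Then ∫_{ℝ³} |jᵖ_ψ|² ρ_ψ^{-1} ≤ N ∫_{ℝ^{3N}} |∇₁ψ|², where the integrand is interpreted as 0 where ρ_ψ = 0. -/
open MeasureTheory
open scoped ENNReal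

private lemma ofReal_sq_norm {E : Type*} [SeminormedAddGroup E] (c : E) :
    ENNReal.ofReal (‖c‖ ^ 2) = (‖c‖₊ : ℝ≥0∞) ^ 2 := by
  rw [ENNReal.ofReal_pow (norm_nonneg c), ofReal_norm, enorm_eq_nnnorm]

private lemma rpow_two_nnnorm {E : Type*} [SeminormedAddGroup E] (c : E) :
    (‖c‖₊ : ℝ≥0∞) ^ (2 : ℝ) = ENNReal.ofReal (‖c‖ ^ 2) := by
  rw [ofReal_sq_norm, ← ENNReal.rpow_natCast]
  norm_num

private lemma sq_rpow_half (a : ℝ≥0∞) : (a ^ (1 / 2 : ℝ)) ^ 2 = a := by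
  rw [← ENNReal.rpow_natCast (a ^ (1 / 2 : ℝ)) 2, ← ENNReal.rpow_mul]
  norm_num

/-- For a normalized wavefunction `ψ ∈ H¹(ℝ^{3N})` (with first-variable gradient components
`Dψ i ∈ L²`), the densities `ρ_ψ(x) = N ∫ |ψ(x,y)|² dy` and
`jᵖ_ψ(x)ᵢ = N ∫ Im(conj ψ ∂ᵢψ) dy` satisfy `∫ |jᵖ_ψ|² ρ_ψ⁻¹ ≤ N ∫ |∇₁ψ|²`,
the integrand being `0` where `ρ_ψ = 0` (real division by zero is zero). -/
theorem stmt4 (N : ℕ) (hN : 1 ≤ N)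
    (ψ : EuclideanSpace ℝ (Fin 3) × EuclideanSpace ℝ (Fin (3 * (N - 1))) → ℂ)
    (Dψ : Fin 3 → EuclideanSpace ℝ (Fin 3) × EuclideanSpace ℝ (Fin (3 * (N - 1))) → ℂ)
    (hψm : Measurable ψ) (hDm : ∀ i, Measurable (Dψ i))
    (hψ : MemLp ψ 2 volume) (hD : ∀ i, MemLp (Dψ i) 2 volume)
    (hnorm : eLpNorm ψ 2 volume = 1) :
    ∫⁻ x : EuclideanSpace ℝ (Fin 3),
        ENNReal.ofReal
          ((∑ i : Fin 3,
              ((N : ℝ) * ∫ y, ((starRingEnd ℂ) (ψ (x, y)) * Dψ i (x, y)).im) ^ 2)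
            / ((N : ℝ) * ∫ y, ‖ψ (x, y)‖ ^ 2))
      ≤ (N : ℝ≥0∞) * ∫⁻ z, ENNReal.ofReal (∑ i : Fin 3, ‖Dψ i z‖ ^ 2) := by
  classical
  have hFm : Measurable fun z : (EuclideanSpace ℝ (Fin 3)) × (EuclideanSpace ℝ (Fin (3 * (N - 1)))) => ENNReal.ofReal (‖ψ z‖ ^ 2) :=
    (hψm.norm.pow_const 2).ennreal_ofReal
  have hGm : ∀ i, Measurable fun z : (EuclideanSpace ℝ (Fin 3)) × (EuclideanSpace ℝ (Fin (3 * (N - 1)))) => ENNReal.ofReal (‖Dψ i z‖ ^ 2) :=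
    fun i => ((hDm i).norm.pow_const 2).ennreal_ofReal
  have hψ2 : (∫⁻ z, ENNReal.ofReal (‖ψ z‖ ^ 2)) < ∞ := by
    have h := lintegral_rpow_enorm_lt_top_of_eLpNorm_lt_top (p := 2)
      two_ne_zero ENNReal.ofNat_ne_top hψ.2
    rw [ENNReal.toReal_ofNat] at h
    simp only [enorm_eq_nnnorm, rpow_two_nnnorm] at h
    exact h
  have hD2 : ∀ i, (∫⁻ z, ENNReal.ofReal (‖Dψ i z‖ ^ 2)) < ∞ := by
    intro i
    have h := lintegral_rpow_enorm_lt_top_of_eLpNorm_lt_top (p := 2)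
      two_ne_zero ENNReal.ofNat_ne_top (hD i).2
    rw [ENNReal.toReal_ofNat] at h
    simp only [enorm_eq_nnnorm, rpow_two_nnnorm] at h
    exact h
  have hiterψ : (∫⁻ x, ∫⁻ y, ENNReal.ofReal (‖ψ (x, y)‖ ^ 2))
      = ∫⁻ z, ENNReal.ofReal (‖ψ z‖ ^ 2) := by
    rw [Measure.volume_eq_prod, lintegral_prod _ hFm.aemeasurable]
  have hiterD : ∀ i, (∫⁻ x, ∫⁻ y, ENNReal.ofReal (‖Dψ i (x, y)‖ ^ 2))
      = ∫⁻ z, ENNReal.ofReal (‖Dψ i z‖ ^ 2) := by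
    intro i
    rw [Measure.volume_eq_prod, lintegral_prod _ (hGm i).aemeasurable]
  have hae1 : ∀ᵐ x : EuclideanSpace ℝ (Fin 3), (∫⁻ y, ENNReal.ofReal (‖ψ (x, y)‖ ^ 2)) < ∞ :=
    ae_lt_top hFm.lintegral_prod_right' (hiterψ ▸ hψ2).ne
  have hae2 : ∀ᵐ x : EuclideanSpace ℝ (Fin 3), ∀ i, (∫⁻ y, ENNReal.ofReal (‖Dψ i (x, y)‖ ^ 2)) < ∞ := by
    rw [ae_all_iff]
    exact fun i => ae_lt_top (hGm i).lintegral_prod_right' ((hiterD i) ▸ hD2 i).ne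
  have hmono : ∫⁻ x : EuclideanSpace ℝ (Fin 3),
        ENNReal.ofReal
          ((∑ i : Fin 3,
              ((N : ℝ) * ∫ y, ((starRingEnd ℂ) (ψ (x, y)) * Dψ i (x, y)).im) ^ 2)
            / ((N : ℝ) * ∫ y, ‖ψ (x, y)‖ ^ 2))
      ≤ ∫⁻ x : EuclideanSpace ℝ (Fin 3), (N : ℝ≥0∞) * ∑ i : Fin 3, ∫⁻ y, ENNReal.ofReal (‖Dψ i (x, y)‖ ^ 2) := by
    refine lintegral_mono_ae ?_
    filter_upwards [hae1, hae2] with x hx1 hx2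
    set f : EuclideanSpace ℝ (Fin (3 * (N - 1))) → ℂ := fun y => ψ (x, y) with hf
    have hfm : Measurable f := hψm.comp measurable_prodMk_left
    have hgm : ∀ i, Measurable fun y => Dψ i (x, y) :=
      fun i => (hDm i).comp measurable_prodMk_left
    set La : ℝ≥0∞ := ∫⁻ y, ENNReal.ofReal (‖f y‖ ^ 2) with hLa
    set Li : Fin 3 → ℝ≥0∞ := fun i => ∫⁻ y, ENNReal.ofReal (‖Dψ i (x, y)‖ ^ 2) with hLi
    set A : ℝ := ∫ y, ‖f y‖ ^ 2 with hA
    have hAnn : 0 ≤ A := integral_nonneg fun y => sq_nonneg _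
    have hAeq : ENNReal.ofReal A = La := by
      rw [hA, integral_eq_lintegral_of_nonneg_ae
        (Filter.Eventually.of_forall fun y => sq_nonneg _)
        (hfm.norm.pow_const 2).aestronglyMeasurable,
        ENNReal.ofReal_toReal hx1.ne]
    by_cases hA0 : A = 0
    · have hLa0 : La = 0 := by rw [← hAeq, hA0, ENNReal.ofReal_zero]
      have hf0 : ∀ᵐ y : EuclideanSpace ℝ (Fin (3 * (N - 1))), f y = 0 := by
        have h := (lintegral_eq_zero_iff (hfm.norm.pow_const 2).ennreal_ofReal).1 hLa0
        filter_upwards [h] with y hy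
        have h1 : ‖f y‖ ^ 2 ≤ 0 := by
          simpa [ENNReal.ofReal_eq_zero] using hy
        have h2 : ‖f y‖ = 0 := by nlinarith [norm_nonneg (f y)]
        simpa using h2
      have hI0 : ∀ i : Fin 3, (∫ y, ((starRingEnd ℂ) (f y) * Dψ i (x, y)).im) = 0 := by
        intro i
        rw [integral_eq_zero_of_ae]
        filter_upwards [hf0] with y hy
        simp [hy]
      simp [hI0, hA0]
    · have hApos : 0 < A := lt_of_le_of_ne hAnn (Ne.symm hA0)
      have hNpos : (0 : ℝ) < N := by exact_mod_cast hN
      set B : Fin 3 → ℝ := fun i => (Li i).toReal with hB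
      have hBeq : ∀ i, ENNReal.ofReal (B i) = Li i := fun i =>
        ENNReal.ofReal_toReal (hx2 i).ne
      have hBnn : ∀ i, 0 ≤ B i := fun i => ENNReal.toReal_nonneg
      have hCS : ∀ i : Fin 3,
          (∫ y, ((starRingEnd ℂ) (f y) * Dψ i (x, y)).im) ^ 2 ≤ A * B i := by
        intro i
        set I : ℝ := ∫ y, ((starRingEnd ℂ) (f y) * Dψ i (x, y)).im with hI
        have h0 : (‖I‖₊ : ℝ≥0∞)
            ≤ ∫⁻ y, (‖((starRingEnd ℂ) (f y) * Dψ i (x, y)).im‖₊ : ℝ≥0∞) :=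
          enorm_integral_le_lintegral_enorm _
        have h2 : (∫⁻ y, (‖((starRingEnd ℂ) (f y) * Dψ i (x, y)).im‖₊ : ℝ≥0∞))
            ≤ ∫⁻ y, (‖f y‖₊ : ℝ≥0∞) * (‖Dψ i (x, y)‖₊ : ℝ≥0∞) := by
          refine lintegral_mono fun y => ?_
          have hle : ‖((starRingEnd ℂ) (f y) * Dψ i (x, y)).im‖₊
              ≤ ‖(starRingEnd ℂ) (f y) * Dψ i (x, y)‖₊ := by
            simp only [← NNReal.coe_le_coe, coe_nnnorm, Real.norm_eq_abs]
            exact Complex.abs_im_le_norm _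
          refine le_trans (ENNReal.coe_le_coe.2 hle) ?_
          rw [nnnorm_mul, ENNReal.coe_mul]
          simp
        have h3 : (∫⁻ y, (‖f y‖₊ : ℝ≥0∞) * (‖Dψ i (x, y)‖₊ : ℝ≥0∞))
            ≤ La ^ (1 / 2 : ℝ) * (Li i) ^ (1 / 2 : ℝ) := by
          have hpq : Real.HolderConjugate 2 2 := ⟨by norm_num, by norm_num, by norm_num⟩
          have hh := ENNReal.lintegral_mul_le_Lp_mul_Lq (volume : Measure (EuclideanSpace ℝ (Fin (3 * (N - 1))))) hpq
            (hfm.nnnorm.coe_nnreal_ennreal).aemeasurable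
            ((hgm i).nnnorm.coe_nnreal_ennreal).aemeasurable
          simp only [Pi.mul_apply, rpow_two_nnnorm] at hh
          exact hh
        have hkey : ENNReal.ofReal (I ^ 2) ≤ ENNReal.ofReal (A * B i) := by
          have e1 : ENNReal.ofReal (I ^ 2) = (‖I‖₊ : ℝ≥0∞) ^ 2 := by
            rw [← ofReal_sq_norm I, Real.norm_eq_abs, sq_abs]
          rw [e1, ENNReal.ofReal_mul hAnn, hAeq, hBeq i]
          calc (‖I‖₊ : ℝ≥0∞) ^ 2
              ≤ (La ^ (1 / 2 : ℝ) * (Li i) ^ (1 / 2 : ℝ)) ^ 2 :=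
                pow_le_pow_left₀ zero_le (le_trans h0 (le_trans h2 h3)) 2
            _ = La * Li i := by rw [mul_pow, sq_rpow_half, sq_rpow_half]
        exact (ENNReal.ofReal_le_ofReal_iff (mul_nonneg hAnn (hBnn i))).1 hkey
      -- combine
      have hdiv : (∑ i : Fin 3,
            ((N : ℝ) * ∫ y, ((starRingEnd ℂ) (f y) * Dψ i (x, y)).im) ^ 2)
            / ((N : ℝ) * A) ≤ (N : ℝ) * ∑ i : Fin 3, B i := by
        rw [div_le_iff₀ (by positivity)]
        calc (∑ i : Fin 3,
              ((N : ℝ) * ∫ y, ((starRingEnd ℂ) (f y) * Dψ i (x, y)).im) ^ 2)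
            ≤ ∑ i : Fin 3, (N : ℝ) ^ 2 * (A * B i) := by
              refine Finset.sum_le_sum fun i _ => ?_
              rw [mul_pow]
              exact mul_le_mul_of_nonneg_left (hCS i) (by positivity)
          _ = ((N : ℝ) * ∑ i : Fin 3, B i) * ((N : ℝ) * A) := by
              rw [Fin.sum_univ_three, Fin.sum_univ_three]
              ring
      calc ENNReal.ofReal
            ((∑ i : Fin 3,
              ((N : ℝ) * ∫ y, ((starRingEnd ℂ) (f y) * Dψ i (x, y)).im) ^ 2)
              / ((N : ℝ) * A))
          ≤ ENNReal.ofReal ((N : ℝ) * ∑ i : Fin 3, B i) := ENNReal.ofReal_le_ofReal hdiv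
        _ = (N : ℝ≥0∞) * ∑ i : Fin 3, Li i := by
            rw [ENNReal.ofReal_mul hNpos.le,
              ENNReal.ofReal_sum_of_nonneg (fun i _ => hBnn i), ENNReal.ofReal_natCast]
            congr 1
            exact Finset.sum_congr rfl fun i _ => hBeq i
  refine hmono.trans ?_
  have hmeas : ∀ i : Fin 3, Measurable fun x : EuclideanSpace ℝ (Fin 3) =>
      ∫⁻ y, ENNReal.ofReal (‖Dψ i (x, y)‖ ^ 2) :=
    fun i => (hGm i).lintegral_prod_right'
  rw [lintegral_const_mul _ (Finset.measurable_sum _ fun i _ => hmeas i)]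
  refine mul_le_mul_right ?_ _
  rw [lintegral_finset_sum _ fun i _ => hmeas i]
  refine le_of_eq ?_
  calc (∑ i : Fin 3, ∫⁻ x, ∫⁻ y, ENNReal.ofReal (‖Dψ i (x, y)‖ ^ 2))
      = ∑ i : Fin 3, ∫⁻ z, ENNReal.ofReal (‖Dψ i z‖ ^ 2) :=
        Finset.sum_congr rfl fun i _ => hiterD i
    _ = ∫⁻ z, ∑ i : Fin 3, ENNReal.ofReal (‖Dψ i z‖ ^ 2) :=
        (lintegral_finset_sum _ fun i _ => hGm i).symm
    _ = ∫⁻ z, ENNReal.ofReal (∑ i : Fin 3, ‖Dψ i z‖ ^ 2) := by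
        refine lintegral_congr fun z => ?_
        rw [ENNReal.ofReal_sum_of_nonneg fun i _ => sq_nonneg _]
end

section
/- If ψₖ ⇀ ψ weakly in H¹(ℝ^{3N}) and ψₖ → ψ in L²(ℝ^{3N})-norm, then for every bounded measurable set M ⊂ ℝ³ and each l = 1,2,3, ∫_{ℝ³} (jᵖ_{ψₖ})_l χ_M → ∫_{ℝ³} (jᵖ_ψ)_l χ_M, where jᵖ_φ(x) = N Im ∫ conj(φ) ∇ₓφ dx₂…dx_N. Consequently if jᵖ_{ψₖ} = jᵖ for all k then jᵖ_ψ = jᵖ a.e. -/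
open MeasureTheory Filter
open scoped Topology

open MeasureTheory Filter Complex
open scoped Topology ComplexConjugate ENNReal

variable {α : Type*} {mα : MeasurableSpace α} {μ : Measure α}

lemma conj_memLp {f : α → ℂ} (hf : MemLp f 2 μ) : MemLp (fun z => conj (f z)) 2 μ := by
  refine MemLp.of_le hf ?_ (Filter.Eventually.of_forall fun x => by simp)
  exact (Complex.continuous_conj.comp_aestronglyMeasurable hf.1)

lemma mul_conj_integrable {f g : α → ℂ} (hf : MemLp f 2 μ) (hg : MemLp g 2 μ) :
    Integrable (fun z => conj (f z) * g z) μ := by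
  have h := hg.smul (conj_memLp hf) (p := 2) (r := 1) (hpqr := ⟨by simp [ENNReal.inv_two_add_inv_two]⟩)
  rw [memLp_one_iff_integrable] at h
  exact h

lemma integral_conj_mul_eq_inner {f g : α → ℂ} (hf : MemLp f 2 μ) (hg : MemLp g 2 μ) :
    ∫ z, conj (f z) * g z ∂μ = @inner ℂ _ _ (hf.toLp f) (hg.toLp g) := by
  rw [L2.inner_def]
  refine integral_congr_ae ?_
  filter_upwards [hf.coeFn_toLp, hg.coeFn_toLp] with z h1 h2
  rw [h1, h2, RCLike.inner_apply, mul_comm]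

lemma norm_integral_conj_mul_le {f g : α → ℂ} (hf : MemLp f 2 μ) (hg : MemLp g 2 μ) :
    ‖∫ z, conj (f z) * g z ∂μ‖ ≤ (eLpNorm f 2 μ).toReal * (eLpNorm g 2 μ).toReal := by
  rw [integral_conj_mul_eq_inner hf hg]
  calc ‖@inner ℂ _ _ (hf.toLp f) (hg.toLp g)‖ ≤ ‖hf.toLp f‖ * ‖hg.toLp g‖ := norm_inner_le_norm _ _
  _ = _ := by rw [Lp.norm_toLp, Lp.norm_toLp]

/-- The `l`-th component of the paramagnetic current density of a wavefunction `φ` on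
`ℝ^{3N} = ℝ³ × ℝ^{3(N-1)}`, whose `l`-th first-variable partial derivative is `dφ`. -/
noncomputable def jComp (N m : ℕ)
    (φ dφ : EuclideanSpace ℝ (Fin 3) × EuclideanSpace ℝ (Fin m) → ℂ)
    (x : EuclideanSpace ℝ (Fin 3)) : ℝ :=
  (N : ℝ) * ∫ y, ((starRingEnd ℂ) (φ (x, y)) * dφ (x, y)).im

lemma jComp_setIntegral (N m : ℕ)
    (φ dφ : EuclideanSpace ℝ (Fin 3) × EuclideanSpace ℝ (Fin m) → ℂ)
    (hφ : MemLp φ 2 volume) (hdφ : MemLp dφ 2 volume)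
    (M : Set (EuclideanSpace ℝ (Fin 3))) :
    ∫ x in M, jComp N m φ dφ x
      = (N : ℝ) * (∫ z in M ×ˢ Set.univ, conj (φ z) * dφ z).im := by
  set F : EuclideanSpace ℝ (Fin 3) × EuclideanSpace ℝ (Fin m) → ℂ :=
    fun z => conj (φ z) * dφ z with hF
  have hI : Integrable F volume := mul_conj_integrable hφ hdφ
  have hm : (volume : Measure (EuclideanSpace ℝ (Fin 3) × EuclideanSpace ℝ (Fin m))).restrict
      (M ×ˢ Set.univ) = (volume.restrict M).prod volume := by
    rw [Measure.volume_eq_prod, ← Measure.prod_restrict, Measure.restrict_univ]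
  have hres : Integrable F ((volume.restrict M).prod volume) := by
    rw [← hm]; exact hI.integrableOn
  have key : (∫ x in M, ∫ y, (F (x, y)).im) = (∫ z in M ×ˢ Set.univ, F z).im := by
    simp only [← RCLike.im_to_complex]
    rw [hm, ← integral_im hres, integral_prod _ hres.im]
  show (∫ x in M, (N : ℝ) * ∫ y, (F (x, y)).im) = (N : ℝ) * (∫ z in M ×ˢ Set.univ, F z).im
  rw [integral_const_mul, key]

lemma jComp_integrable (N m : ℕ)
    (φ dφ : EuclideanSpace ℝ (Fin 3) × EuclideanSpace ℝ (Fin m) → ℂ)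
    (hφ : MemLp φ 2 volume) (hdφ : MemLp dφ 2 volume) :
    Integrable (jComp N m φ dφ) volume := by
  have hI : Integrable (fun z => conj (φ z) * dφ z) volume := mul_conj_integrable hφ hdφ
  rw [Measure.volume_eq_prod] at hI
  have h2 := (hI.im).integral_prod_left
  exact h2.const_mul (N : ℝ)

/-- If `ψₖ ⇀ ψ` weakly in `H¹(ℝ^{3N})` (weak `L²`-convergence of `ψₖ` and of the first-variable
partial derivatives `Dψₖ l`) and `ψₖ → ψ` in `L²`-norm, then for every bounded measurable
`M ⊂ ℝ³` and each component `l`, `∫_M (jᵖ_{ψₖ})_l → ∫_M (jᵖ_ψ)_l`.  Consequently, if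
`jᵖ_{ψₖ} = jᵖ` (a.e.) for all `k`, then `jᵖ_ψ = jᵖ` a.e. -/
theorem stmt6 (N m : ℕ) (hN : 1 ≤ N)
    (ψk : ℕ → EuclideanSpace ℝ (Fin 3) × EuclideanSpace ℝ (Fin m) → ℂ)
    (ψ : EuclideanSpace ℝ (Fin 3) × EuclideanSpace ℝ (Fin m) → ℂ)
    (Dψk : ℕ → Fin 3 → EuclideanSpace ℝ (Fin 3) × EuclideanSpace ℝ (Fin m) → ℂ)
    (Dψ : Fin 3 → EuclideanSpace ℝ (Fin 3) × EuclideanSpace ℝ (Fin m) → ℂ)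
    (hψkm : ∀ k, Measurable (ψk k)) (hψm : Measurable ψ)
    (hDkm : ∀ k l, Measurable (Dψk k l)) (hDm : ∀ l, Measurable (Dψ l))
    (hψkL2 : ∀ k, MemLp (ψk k) 2 volume) (hψL2 : MemLp ψ 2 volume)
    (hDkL2 : ∀ k l, MemLp (Dψk k l) 2 volume) (hDL2 : ∀ l, MemLp (Dψ l) 2 volume)
    (hnorm : ∀ k, eLpNorm (ψk k) 2 volume = 1)
    (hstrong : Tendsto (fun k => eLpNorm (ψk k - ψ) 2 volume) atTop (𝓝 0))
    (hweakψ : ∀ h, MemLp h 2 volume →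
      Tendsto (fun k => ∫ z, (starRingEnd ℂ) (ψk k z) * h z) atTop
        (𝓝 (∫ z, (starRingEnd ℂ) (ψ z) * h z)))
    (hweakD : ∀ l, ∀ h, MemLp h 2 volume →
      Tendsto (fun k => ∫ z, (starRingEnd ℂ) (Dψk k l z) * h z) atTop
        (𝓝 (∫ z, (starRingEnd ℂ) (Dψ l z) * h z))) :
    (∀ M : Set (EuclideanSpace ℝ (Fin 3)), MeasurableSet M → Bornology.IsBounded M →
        ∀ l : Fin 3,
          Tendsto (fun k => ∫ x in M, jComp N m (ψk k) (Dψk k l) x) atTop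
            (𝓝 (∫ x in M, jComp N m ψ (Dψ l) x))) ∧
      ∀ jp : Fin 3 → EuclideanSpace ℝ (Fin 3) → ℝ,
        (∀ k l, ∀ᵐ x ∂(volume : Measure (EuclideanSpace ℝ (Fin 3))),
            jComp N m (ψk k) (Dψk k l) x = jp l x) →
          ∀ l, ∀ᵐ x ∂(volume : Measure (EuclideanSpace ℝ (Fin 3))),
            jComp N m ψ (Dψ l) x = jp l x := by
  -- uniform bound on the L² norms of the derivatives
  have hDbound : ∀ l : Fin 3, ∃ C : ℝ, ∀ k,
      (eLpNorm (Dψk k l) 2 volume).toReal ≤ C := by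
    intro l
    set Dk : ℕ → Lp ℂ 2 (volume : Measure (EuclideanSpace ℝ (Fin 3) × EuclideanSpace ℝ (Fin m)))
      := fun k => (hDkL2 k l).toLp _ with hDk
    set T : ℕ → Lp ℂ 2 (volume : Measure (EuclideanSpace ℝ (Fin 3) × EuclideanSpace ℝ (Fin m)))
        →L[ℂ] ℂ := fun k => innerSL ℂ (Dk k) with hT
    have hb : ∀ h, ∃ C, ∀ k, ‖T k h‖ ≤ C := by
      intro h
      have hmem := Lp.memLp h
      have hconv := hweakD l _ hmem
      have heq : ∀ k, T k h = ∫ z, conj (Dψk k l z) * (h : _ → ℂ) z := by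
        intro k
        rw [integral_conj_mul_eq_inner (hDkL2 k l) hmem, Lp.toLp_coeFn]
        rfl
      obtain ⟨C, hC⟩ := hconv.norm.bddAbove_range
      refine ⟨C, fun k => ?_⟩
      rw [heq k]
      exact hC ⟨k, rfl⟩
    obtain ⟨C', hC'⟩ := banach_steinhaus hb
    refine ⟨C', fun k => ?_⟩
    have h1 : ‖T k‖ = (eLpNorm (Dψk k l) 2 volume).toReal := by
      rw [hT, innerSL_apply_norm, hDk, Lp.norm_toLp]
    rw [← h1]; exact hC' k
  have hsr : Tendsto (fun k => (eLpNorm (ψk k - ψ) 2 volume).toReal) atTop (𝓝 0) := by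
    have := (ENNReal.tendsto_toReal (by simp : (0 : ℝ≥0∞) ≠ ⊤)).comp hstrong
    simpa [Function.comp_def] using this
  -- main convergence of the current integrals
  have key : ∀ M : Set (EuclideanSpace ℝ (Fin 3)), MeasurableSet M → ∀ l : Fin 3,
      Tendsto (fun k => ∫ z in M ×ˢ Set.univ, conj (ψk k z) * Dψk k l z) atTop
        (𝓝 (∫ z in M ×ˢ Set.univ, conj (ψ z) * Dψ l z)) := by
    intro M hM l
    obtain ⟨C, hC⟩ := hDbound l
    set S := M ×ˢ (Set.univ : Set (EuclideanSpace ℝ (Fin m))) with hSdef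
    have hS : MeasurableSet S := hM.prod MeasurableSet.univ
    have hindmul : ∀ (g f : EuclideanSpace ℝ (Fin 3) × EuclideanSpace ℝ (Fin m) → ℂ),
        ∫ z, conj (g z) * S.indicator f z = ∫ z in S, conj (g z) * f z := by
      intro g f
      rw [← integral_indicator hS]
      congr 1
      funext z
      by_cases hz : z ∈ S <;> simp [hz]
    have h1 : Tendsto (fun k => ∫ z in S, conj ((ψk k - ψ) z) * Dψk k l z) atTop (𝓝 0) := by
      have hCnn : (0:ℝ) ≤ C := le_trans (ENNReal.toReal_nonneg) (hC 0)
      refine squeeze_zero_norm (fun k => ?_) (by simpa using hsr.mul_const C)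
      rw [← hindmul]
      refine le_trans (norm_integral_conj_mul_le ((hψkL2 k).sub hψL2)
        ((hDkL2 k l).indicator hS)) ?_
      refine mul_le_mul_of_nonneg_left ?_ ENNReal.toReal_nonneg
      refine le_trans ?_ (hC k)
      exact ENNReal.toReal_mono (hDkL2 k l).2.ne (eLpNorm_indicator_le _)
    have h2 : Tendsto (fun k => ∫ z in S, conj (ψ z) * Dψk k l z) atTop
        (𝓝 (∫ z in S, conj (ψ z) * Dψ l z)) := by
      have h3 := hweakD l (S.indicator ψ) (hψL2.indicator hS)
      simp only [hindmul] at h3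
      have h4 : Tendsto (fun k => conj (∫ z in S, conj (Dψk k l z) * ψ z)) atTop
          (𝓝 (conj (∫ z in S, conj (Dψ l z) * ψ z))) :=
        (Complex.continuous_conj.tendsto _).comp h3
      have hconj : ∀ g : EuclideanSpace ℝ (Fin 3) × EuclideanSpace ℝ (Fin m) → ℂ,
          conj (∫ z in S, conj (g z) * ψ z) = ∫ z in S, conj (ψ z) * g z := by
        intro g
        rw [← integral_conj]
        congr 1
        funext z
        simp [mul_comm]
      simp only [hconj] at h4
      exact h4
    have hsplit : ∀ k, (∫ z in S, conj (ψk k z) * Dψk k l z)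
        = (∫ z in S, conj ((ψk k - ψ) z) * Dψk k l z) + ∫ z in S, conj (ψ z) * Dψk k l z := by
      intro k
      rw [← integral_add (mul_conj_integrable ((hψkL2 k).sub hψL2) (hDkL2 k l)).integrableOn
        (mul_conj_integrable hψL2 (hDkL2 k l)).integrableOn]
      congr 1
      funext z
      simp only [Pi.sub_apply, map_sub, sub_mul]
      ring
    have hcomb := h1.add h2
    rw [zero_add] at hcomb
    exact hcomb.congr fun k => (hsplit k).symm
  have part1 : ∀ M : Set (EuclideanSpace ℝ (Fin 3)), MeasurableSet M →
      Bornology.IsBounded M → ∀ l : Fin 3,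
      Tendsto (fun k => ∫ x in M, jComp N m (ψk k) (Dψk k l) x) atTop
        (𝓝 (∫ x in M, jComp N m ψ (Dψ l) x)) := by
    intro M hM _ l
    have hk := key M hM l
    have base : Tendsto (fun k => (N : ℝ) *
        (∫ z in M ×ˢ Set.univ, conj (ψk k z) * Dψk k l z).im) atTop
        (𝓝 ((N : ℝ) * (∫ z in M ×ˢ Set.univ, conj (ψ z) * Dψ l z).im)) :=
      ((Complex.continuous_im.tendsto _).comp hk).const_mul _
    rw [jComp_setIntegral N m ψ (Dψ l) hψL2 (hDL2 l) M]
    exact base.congr fun k =>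
      (jComp_setIntegral N m (ψk k) (Dψk k l) (hψkL2 k) (hDkL2 k l) M).symm
  refine ⟨part1, ?_⟩
  intro jp hjp l
  have hintψ : Integrable (jComp N m ψ (Dψ l)) volume :=
    jComp_integrable N m ψ (Dψ l) hψL2 (hDL2 l)
  have hjpInt : Integrable (jp l) volume :=
    (jComp_integrable N m (ψk 0) (Dψk 0 l) (hψkL2 0) (hDkL2 0 l)).congr (hjp 0 l)
  have hbdd : ∀ M : Set (EuclideanSpace ℝ (Fin 3)), MeasurableSet M →
      Bornology.IsBounded M →
      ∫ x in M, jComp N m ψ (Dψ l) x = ∫ x in M, jp l x := by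
    intro M hM hMb
    have t1 := part1 M hM hMb l
    have t2 : ∀ k, ∫ x in M, jComp N m (ψk k) (Dψk k l) x = ∫ x in M, jp l x := fun k =>
      setIntegral_congr_ae hM ((hjp k l).mono fun x hx _ => hx)
    exact tendsto_nhds_unique (t1.congr t2) tendsto_const_nhds
  refine Integrable.ae_eq_of_forall_setIntegral_eq _ _ hintψ hjpInt fun s hs _ => ?_
  set B : ℕ → Set (EuclideanSpace ℝ (Fin 3)) := fun n => s ∩ Metric.closedBall 0 n with hB
  have hBm : ∀ n, MeasurableSet (B n) := fun n => hs.inter measurableSet_closedBall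
  have hmono : Monotone B := fun i j hij =>
    Set.inter_subset_inter_right _ (Metric.closedBall_subset_closedBall (by exact_mod_cast hij))
  have hunion : ⋃ n, B n = s := by
    rw [hB, ← Set.inter_iUnion, Metric.iUnion_closedBall_nat, Set.inter_univ]
  have hBbd : ∀ n, Bornology.IsBounded (B n) := fun n =>
    (Metric.isBounded_closedBall).subset Set.inter_subset_right
  have hf := tendsto_setIntegral_of_monotone hBm hmono
    (hunion ▸ hintψ.integrableOn :
      IntegrableOn (jComp N m ψ (Dψ l)) (⋃ n, B n) volume)
  have hg := tendsto_setIntegral_of_monotone hBm hmono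
    (hunion ▸ hjpInt.integrableOn : IntegrableOn (jp l) (⋃ n, B n) volume)
  rw [hunion] at hf hg
  have heq : ∀ n, ∫ x in B n, jComp N m ψ (Dψ l) x = ∫ x in B n, jp l x := fun n =>
    hbdd (B n) (hBm n) (hBbd n)
  exact tendsto_nhds_unique (hf.congr heq) hg
end

section
/- Let ρₙ → ρ in L¹(ℝ³) with ρₙ, ρ ≥ 0, jₙ → j in (L¹(ℝ³))³, and suppose liminfₙ ∫ |jₙ|² ρₙ⁻¹ < ∞. Then ∫ |j|² ρ⁻¹ ≤ liminfₙ ∫ |jₙ|² ρₙ⁻¹. -/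
open MeasureTheory Filter
open scoped ENNReal Topology

/-- Pointwise lower semicontinuity of `(a, b) ↦ ofReal (a²) / ofReal b`
along convergent real sequences. -/
lemma lsc_aux {a b : ℝ} {an bn : ℕ → ℝ}
    (ha : Tendsto an atTop (𝓝 a)) (hb : Tendsto bn atTop (𝓝 b)) :
    ENNReal.ofReal (a ^ 2) / ENNReal.ofReal b
      ≤ liminf (fun k => ENNReal.ofReal (an k ^ 2) / ENNReal.ofReal (bn k)) atTop := by
  have hA : Tendsto (fun k => ENNReal.ofReal (an k ^ 2)) atTop (𝓝 (ENNReal.ofReal (a ^ 2))) :=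
    (ENNReal.continuous_ofReal.tendsto _).comp (ha.pow 2)
  have hB : Tendsto (fun k => ENNReal.ofReal (bn k)) atTop (𝓝 (ENNReal.ofReal b)) :=
    (ENNReal.continuous_ofReal.tendsto _).comp hb
  by_cases hA0 : ENNReal.ofReal (a ^ 2) = 0
  · simp [hA0, ENNReal.zero_div]
  · have hBinv : Tendsto (fun k => (ENNReal.ofReal (bn k))⁻¹) atTop
        (𝓝 (ENNReal.ofReal b)⁻¹) := hB.inv
    have hdiv : Tendsto (fun k => ENNReal.ofReal (an k ^ 2) / ENNReal.ofReal (bn k)) atTop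
        (𝓝 (ENNReal.ofReal (a ^ 2) / ENNReal.ofReal b)) := by
      simp only [div_eq_mul_inv]
      exact ENNReal.Tendsto.mul hA (Or.inl hA0) hBinv (Or.inr ENNReal.ofReal_ne_top)
    exact (hdiv.liminf_eq).symm.le

/-- Lower semicontinuity of `J₀(ρ, j) = ∫ |j|² ρ⁻¹` along `L¹`-convergent sequences:
if `ρₙ → ρ` in `L¹` (`ρₙ, ρ ≥ 0`), `jₙ → j` in `(L¹)³`, and
`liminf ∫ |jₙ|² ρₙ⁻¹ < ∞`, then `∫ |j|² ρ⁻¹ ≤ liminf ∫ |jₙ|² ρₙ⁻¹`. -/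
theorem stmt9 (ρn : ℕ → EuclideanSpace ℝ (Fin 3) → ℝ) (ρ : EuclideanSpace ℝ (Fin 3) → ℝ)
    (jn : ℕ → EuclideanSpace ℝ (Fin 3) → EuclideanSpace ℝ (Fin 3))
    (j : EuclideanSpace ℝ (Fin 3) → EuclideanSpace ℝ (Fin 3))
    (hρnm : ∀ n, Measurable (ρn n)) (hρm : Measurable ρ)
    (hjnm : ∀ n, Measurable (jn n)) (hjm : Measurable j)
    (hρni : ∀ n, Integrable (ρn n) volume) (hρi : Integrable ρ volume)
    (hjni : ∀ n, Integrable (jn n) volume) (hji : Integrable j volume)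
    (hρnn : ∀ n, ∀ᵐ x ∂(volume : Measure (EuclideanSpace ℝ (Fin 3))), 0 ≤ ρn n x)
    (hρpos : ∀ᵐ x ∂(volume : Measure (EuclideanSpace ℝ (Fin 3))), 0 ≤ ρ x)
    (hρconv : Tendsto (fun n => eLpNorm (ρn n - ρ) 1 volume) atTop (𝓝 0))
    (hjconv : Tendsto (fun n => eLpNorm (jn n - j) 1 volume) atTop (𝓝 0))
    (hfin :
      liminf (fun n => ∫⁻ x, ENNReal.ofReal (‖jn n x‖ ^ 2) / ENNReal.ofReal (ρn n x)) atTop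
        < ⊤) :
    ∫⁻ x, ENNReal.ofReal (‖j x‖ ^ 2) / ENNReal.ofReal (ρ x)
      ≤ liminf (fun n => ∫⁻ x, ENNReal.ofReal (‖jn n x‖ ^ 2) / ENNReal.ofReal (ρn n x))
          atTop := by
  set u : ℕ → ℝ≥0∞ :=
    fun n => ∫⁻ x, ENNReal.ofReal (‖jn n x‖ ^ 2) / ENNReal.ofReal (ρn n x) with hu
  refine le_of_forall_gt_imp_ge_of_dense fun c hc => ?_
  obtain ⟨φ, hφmono, hφ⟩ := extraction_of_frequently_atTop (frequently_lt_of_liminf_lt (by isBoundedDefault) hc)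
  -- extract an a.e. convergent subsequence of ρn
  have hρ1 : Tendsto (fun k => eLpNorm (ρn (φ k) - ρ) 1 volume) atTop (𝓝 0) :=
    hρconv.comp hφmono.tendsto_atTop
  have hρmeas : TendstoInMeasure volume (fun k => ρn (φ k)) atTop ρ :=
    tendstoInMeasure_of_tendsto_eLpNorm one_ne_zero
      (fun k => (hρnm (φ k)).aestronglyMeasurable) hρm.aestronglyMeasurable hρ1
  obtain ⟨ψ₁, hψ₁mono, hψ₁⟩ := hρmeas.exists_seq_tendsto_ae
  -- extract an a.e. convergent further subsequence of jn
  have hj1 : Tendsto (fun k => eLpNorm (jn (φ (ψ₁ k)) - j) 1 volume) atTop (𝓝 0) :=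
    hjconv.comp (hφmono.comp hψ₁mono).tendsto_atTop
  have hjmeas : TendstoInMeasure volume (fun k => jn (φ (ψ₁ k))) atTop j :=
    tendstoInMeasure_of_tendsto_eLpNorm one_ne_zero
      (fun k => (hjnm (φ (ψ₁ k))).aestronglyMeasurable) hjm.aestronglyMeasurable hj1
  obtain ⟨ψ₂, hψ₂mono, hψ₂⟩ := hjmeas.exists_seq_tendsto_ae
  set ns : ℕ → ℕ := fun k => φ (ψ₁ (ψ₂ k)) with hns
  have hρae : ∀ᵐ x ∂(volume : Measure (EuclideanSpace ℝ (Fin 3))),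
      Tendsto (fun k => ρn (ns k) x) atTop (𝓝 (ρ x)) := by
    filter_upwards [hψ₁] with x hx using hx.comp hψ₂mono.tendsto_atTop
  have hpt : ∀ᵐ x ∂(volume : Measure (EuclideanSpace ℝ (Fin 3))),
      ENNReal.ofReal (‖j x‖ ^ 2) / ENNReal.ofReal (ρ x)
        ≤ liminf (fun k =>
            ENNReal.ofReal (‖jn (ns k) x‖ ^ 2) / ENNReal.ofReal (ρn (ns k) x)) atTop := by
    filter_upwards [hρae, hψ₂] with x hρx hjx
    exact lsc_aux hjx.norm hρx
  calc ∫⁻ x, ENNReal.ofReal (‖j x‖ ^ 2) / ENNReal.ofReal (ρ x)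
      ≤ ∫⁻ x, liminf (fun k =>
          ENNReal.ofReal (‖jn (ns k) x‖ ^ 2) / ENNReal.ofReal (ρn (ns k) x)) atTop :=
        lintegral_mono_ae hpt
    _ ≤ liminf (fun k => u (ns k)) atTop :=
        lintegral_liminf_le fun k =>
          (((hjnm (ns k)).norm.pow_const 2).ennreal_ofReal.div
            (hρnm (ns k)).ennreal_ofReal)
    _ ≤ c := liminf_le_of_frequently_le
        (Frequently.of_forall fun k => (hφ (ψ₁ (ψ₂ k))).le)
end

section
/- Let φ_k(x) = (ρ(x)/N)^{1/2} exp(i(k f(x₁) − M(x₁) + S(x))) for k = 0,…,N−1, where ρ ≥ 0 with ∫_{ℝ³} ρ = N, f(x₁) = (2π/N)∫_{−∞}^{x₁}∫_{ℝ²} ρ, and M, S are real-valued. Then the φ_k are orthonormal in L²(ℝ³): (φ_k, φ_l)_{L²} = δ_{kl}. -/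
open MeasureTheory

/-- The phase `f(x₁) = (2π/N) ∫_{y₁ ≤ x₁} ρ(y) dy` of the determinantal construction. -/
noncomputable def detPhase (N : ℕ) (ρ : EuclideanSpace ℝ (Fin 3) → ℝ) (t : ℝ) : ℝ :=
  (2 * Real.pi / N) * ∫ x in {x : EuclideanSpace ℝ (Fin 3) | x 0 ≤ t}, ρ x

/-- The orbitals `φ_k = (ρ/N)^{1/2} e^{i(k f(x₁) − M(x₁) + S(x))}`. -/
noncomputable def detOrbital (N : ℕ) (ρ : EuclideanSpace ℝ (Fin 3) → ℝ)
    (M : ℝ → ℝ) (S : EuclideanSpace ℝ (Fin 3) → ℝ) (k : ℕ)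
    (x : EuclideanSpace ℝ (Fin 3)) : ℂ :=
  (Real.sqrt (ρ x / N) : ℂ) *
    Complex.exp (Complex.I *
      (((k : ℝ) * detPhase N ρ (x 0) - M (x 0) + S x : ℝ) : ℂ))

open Set Filter Topology intervalIntegral

/-- An affine hyperplane `x 0 = t` in `ℝ³` is Lebesgue-null. -/
lemma detAux_hplane (t : ℝ) : volume {x : EuclideanSpace ℝ (Fin 3) | x 0 = t} = 0 := by
  have e := EuclideanSpace.volume_preserving_symm_measurableEquiv_toLp (Fin 3)
  have hT : volume {y : Fin 3 → ℝ | y 0 = t} = 0 := by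
    have : {y : Fin 3 → ℝ | y 0 = t}
        = Set.univ.pi (fun i => if i = 0 then ({t} : Set ℝ) else univ) := by
      ext y
      constructor
      · intro h i _; by_cases hi : i = 0 <;> simp_all
      · intro h; simpa using h 0 (Set.mem_univ 0)
    rw [this, volume_pi_pi]
    exact Finset.prod_eq_zero (Finset.mem_univ 0) (by simp)
  have hpre : {x : EuclideanSpace ℝ (Fin 3) | x 0 = t}
      = (MeasurableEquiv.toLp 2 (Fin 3 → ℝ)).symm ⁻¹' {y : Fin 3 → ℝ | y 0 = t} := rfl
  rw [hpre, e.measure_preimage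
    ((measurableSet_eq_fun (measurable_pi_apply 0) measurable_const).nullMeasurableSet)]
  exact hT

/-- A finite measure on `ℝ` with continuous CDF `F` pushes forward under `F` to Lebesgue
measure on `[0, N]`. -/
lemma detAux_cdf_map (μ : Measure ℝ) [IsFiniteMeasure μ] (F : ℝ → ℝ) (Nr : ℝ)
    (hμ : ∀ t, μ (Iic t) = ENNReal.ofReal (F t)) (hμu : μ univ = ENNReal.ofReal Nr)
    (hFcont : Continuous F) (hFmono : Monotone F) (hF0 : ∀ t, 0 ≤ F t) (hFle : ∀ t, F t ≤ Nr)
    (hFtop : Tendsto F atTop (𝓝 Nr)) (hFbot : Tendsto F atBot (𝓝 0)) :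
    Measure.map F μ = volume.restrict (Icc 0 Nr) := by
  haveI : IsFiniteMeasure (Measure.map F μ) := by
    constructor
    rw [Measure.map_apply hFcont.measurable MeasurableSet.univ]
    exact lt_of_le_of_lt (measure_mono (Set.subset_univ _)) (measure_lt_top μ univ)
  refine MeasureTheory.Measure.ext_of_Iic (Measure.map F μ) _ fun s => ?_
  rw [Measure.map_apply hFcont.measurable measurableSet_Iic,
    Measure.restrict_apply measurableSet_Iic]
  rcases lt_or_ge s 0 with hs | hs
  · have h1 : F ⁻¹' Iic s = ∅ := by
      ext t; simp only [Set.mem_preimage, Set.mem_Iic, Set.mem_empty_iff_false, iff_false, not_le]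
      exact lt_of_lt_of_le hs (hF0 t)
    have h2 : Iic s ∩ Icc 0 Nr = ∅ := by
      ext u
      simp only [Set.mem_inter_iff, Set.mem_Iic, Set.mem_Icc, Set.mem_empty_iff_false, iff_false]
      rintro ⟨h1, h2, -⟩; exact absurd (le_trans h2 h1) (not_le.mpr hs)
    rw [h1, h2]; simp
  · rcases lt_or_ge s Nr with hsN | hsN
    · have hRHS : Iic s ∩ Icc 0 Nr = Icc 0 s := by
        ext u
        simp only [Set.mem_inter_iff, Set.mem_Iic, Set.mem_Icc]
        exact ⟨fun ⟨h1, h2, _⟩ => ⟨h2, h1⟩, fun ⟨h1, h2⟩ => ⟨h2, h1, le_trans h2 (le_of_lt hsN)⟩⟩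
      rw [hRHS, Real.volume_Icc, sub_zero]
      by_cases hA : (F ⁻¹' Iic s).Nonempty
      · have hclosed : IsClosed (F ⁻¹' Iic s) := isClosed_Iic.preimage hFcont
        have hbdd : BddAbove (F ⁻¹' Iic s) := by
          obtain ⟨t0, ht0⟩ := (hFtop.eventually (eventually_gt_nhds hsN)).exists
          refine ⟨t0, fun a ha => ?_⟩
          by_contra hc
          exact absurd (le_trans (hFmono (le_of_lt (not_le.mp hc))) ha) (not_le.mpr ht0)
        set T := sSup (F ⁻¹' Iic s) with hT
        have hTmem : T ∈ F ⁻¹' Iic s := hclosed.csSup_mem hA hbdd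
        have hAeq : F ⁻¹' Iic s = Iic T := by
          ext t
          constructor
          · intro ht; exact le_csSup hbdd ht
          · intro ht; exact le_trans (hFmono ht) hTmem
        have hFT : F T = s := by
          refine le_antisymm hTmem ?_
          have hseq : Tendsto (fun n : ℕ => F (T + 1 / (n + 1))) atTop (𝓝 (F T)) := by
            refine (hFcont.continuousAt).tendsto.comp ?_
            have : Tendsto (fun n : ℕ => T + 1 / ((n : ℝ) + 1)) atTop (𝓝 (T + 0)) :=
              tendsto_const_nhds.add tendsto_one_div_add_atTop_nhds_zero_nat
            simpa using this
          refine ge_of_tendsto hseq (Filter.Eventually.of_forall fun n => ?_)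
          by_contra hc
          have hmem : T + 1 / ((n : ℝ) + 1) ∈ F ⁻¹' Iic s := le_of_lt (not_le.mp hc)
          have := le_csSup hbdd hmem
          rw [← hT] at this
          have hpos : (0:ℝ) < 1 / ((n : ℝ) + 1) := by positivity
          linarith
        rw [hAeq, hμ, hFT]
      · have hAempty : F ⁻¹' Iic s = ∅ := Set.not_nonempty_iff_eq_empty.mp hA
        have hs0 : s = 0 := by
          by_contra h
          have hspos : 0 < s := lt_of_le_of_ne hs (Ne.symm h)
          obtain ⟨t, ht⟩ := (hFbot.eventually (eventually_lt_nhds hspos)).exists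
          have : t ∈ F ⁻¹' Iic s := le_of_lt ht
          rw [hAempty] at this
          exact this
        rw [hAempty, hs0]
        simp
    · have h1 : F ⁻¹' Iic s = univ := by
        ext t; simp only [Set.mem_preimage, Set.mem_Iic, Set.mem_univ, iff_true]
        exact le_trans (hFle t) hsN
      have h2 : Iic s ∩ Icc 0 Nr = Icc 0 Nr :=
        Set.inter_eq_self_of_subset_right fun u hu => le_trans hu.2 hsN
      rw [h1, h2, hμu, Real.volume_Icc, sub_zero]

/-- The oscillatory integral over `[0, N]` vanishes when `e^{icN} = 1`. -/
lemma detAux_osc (Nr : ℝ) (hNr : 0 < Nr) (c : ℝ) (hc : c ≠ 0)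
    (hcN : Complex.exp (Complex.I * c * Nr) = 1) :
    (∫ u in Icc (0:ℝ) Nr, Complex.exp (Complex.I * ((c * u : ℝ) : ℂ))) = 0 := by
  rw [integral_Icc_eq_integral_Ioc, ← intervalIntegral.integral_of_le hNr.le]
  have : ∀ u : ℝ, Complex.exp (Complex.I * ((c * u : ℝ) : ℂ))
      = Complex.exp ((Complex.I * c) * (u : ℂ)) := by
    intro u; push_cast; ring_nf
  simp_rw [this]
  rw [integral_exp_mul_complex (by simp [Complex.I_ne_zero, hc])]
  rw [div_eq_zero_iff]
  left
  simp only [Complex.ofReal_zero, mul_zero, Complex.exp_zero]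
  rw [hcN, sub_self]

lemma detAux_expone (N k l : ℕ) (hN : 1 ≤ N) :
    Complex.exp (Complex.I * (((l:ℝ) - k) * (2 * Real.pi / N)) * (N:ℝ)) = 1 := by
  have hNne : (N : ℂ) ≠ 0 := Nat.cast_ne_zero.mpr (by omega)
  set m : ℤ := (l : ℤ) - k with hm
  have h1 : (m : ℂ) = (l : ℂ) - k := by rw [hm]; push_cast; ring
  have h2 : (Complex.I * (((l:ℝ) - k) * (2 * Real.pi / N)) * (N:ℝ))
      = (m : ℂ) * (2 * Real.pi * Complex.I) := by
    rw [h1]; push_cast; field_simp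
  rw [h2, Complex.exp_int_mul_two_pi_mul_I]

lemma detAux_intOfReal {X : Type*} [MeasurableSpace X] (μ' : MeasureTheory.Measure X)
    (f : X → ℝ) : ∫ x, ((f x : ℝ) : ℂ) ∂μ' = ((∫ x, f x ∂μ' : ℝ) : ℂ) :=
  integral_ofReal

/-- If `ρ ≥ 0`, `∫ ρ = N`, then the orbitals `φ_k`, `k = 0, …, N−1`, are orthonormal in
`L²(ℝ³)`: `(φ_k, φ_l) = δ_{kl}`. -/
theorem stmt13 (N : ℕ) (hN : 1 ≤ N) (ρ : EuclideanSpace ℝ (Fin 3) → ℝ)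
    (M : ℝ → ℝ) (S : EuclideanSpace ℝ (Fin 3) → ℝ)
    (hρm : Measurable ρ) (hρnn : ∀ x, 0 ≤ ρ x) (hρi : Integrable ρ volume)
    (hρN : (∫ x, ρ x) = N) (hM : Measurable M) (hS : Measurable S) :
    ∀ k l : ℕ, k < N → l < N →
      (∫ x, (starRingEnd ℂ) (detOrbital N ρ M S k x) * detOrbital N ρ M S l x)
        = if k = l then 1 else 0 := by
  intro k l hk hl
  have hNpos : (0:ℝ) < N := by exact_mod_cast Nat.lt_of_lt_of_le Nat.zero_lt_one hN
  -- pointwise simplification of the integrand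
  have key : ∀ x : EuclideanSpace ℝ (Fin 3),
      (starRingEnd ℂ) (detOrbital N ρ M S k x) * detOrbital N ρ M S l x
        = ((ρ x / N : ℝ) : ℂ) *
          Complex.exp (Complex.I * ((((l : ℝ) - (k : ℝ)) * detPhase N ρ (x 0) : ℝ) : ℂ)) := by
    intro x
    rw [detOrbital, detOrbital, map_mul, Complex.conj_ofReal, ← Complex.exp_conj, map_mul,
      Complex.conj_I, Complex.conj_ofReal]
    rw [mul_mul_mul_comm, ← Complex.exp_add, ← Complex.ofReal_mul,
      Real.mul_self_sqrt (div_nonneg (hρnn x) (Nat.cast_nonneg N))]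
    congr 1
    push_cast
    ring_nf
  by_cases hkl : k = l
  · subst hkl
    rw [if_pos rfl]
    have : ∀ x : EuclideanSpace ℝ (Fin 3),
        (starRingEnd ℂ) (detOrbital N ρ M S k x) * detOrbital N ρ M S k x
          = ((ρ x / N : ℝ) : ℂ) := by
      intro x
      rw [key x]
      simp
    simp_rw [this]
    rw [detAux_intOfReal]
    norm_cast
    rw [MeasureTheory.integral_div, hρN]
    field_simp
  · rw [if_neg hkl]
    -- set up measures and CDF
    have hme : Measurable fun x : EuclideanSpace ℝ (Fin 3) => x 0 := (measurable_pi_apply 0).comp (MeasurableEquiv.toLp 2 (Fin 3 → ℝ)).symm.measurable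
    have hset : ∀ t : ℝ, MeasurableSet {x : EuclideanSpace ℝ (Fin 3) | x 0 ≤ t} :=
      fun t => hme measurableSet_Iic
    set F : ℝ → ℝ := fun t => ∫ x in {x : EuclideanSpace ℝ (Fin 3) | x 0 ≤ t}, ρ x with hFdef
    set ν : Measure (EuclideanSpace ℝ (Fin 3)) :=
      volume.withDensity (fun x => ENNReal.ofReal (ρ x)) with hνdef
    set μ : Measure ℝ := Measure.map (fun x : EuclideanSpace ℝ (Fin 3) => x 0) ν with hμdef
    have hμIic : ∀ t, μ (Iic t) = ENNReal.ofReal (F t) := by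
      intro t
      rw [hμdef, Measure.map_apply hme measurableSet_Iic, hνdef,
        show ((fun x : EuclideanSpace ℝ (Fin 3) => x 0) ⁻¹' Iic t)
          = {x : EuclideanSpace ℝ (Fin 3) | x 0 ≤ t} from rfl,
        withDensity_apply _ (hset t)]
      exact (ofReal_integral_eq_lintegral_ofReal hρi.integrableOn
        (Filter.Eventually.of_forall fun x => hρnn x)).symm
    have hμuniv : μ univ = ENNReal.ofReal N := by
      rw [hμdef, Measure.map_apply hme MeasurableSet.univ]
      have : (fun x : EuclideanSpace ℝ (Fin 3) => x 0) ⁻¹' univ = univ := rfl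
      rw [this, hνdef, withDensity_apply _ MeasurableSet.univ, Measure.restrict_univ,
        ← ofReal_integral_eq_lintegral_ofReal hρi (Filter.Eventually.of_forall fun x => hρnn x),
        hρN]
    haveI : IsFiniteMeasure μ := ⟨by rw [hμuniv]; exact ENNReal.ofReal_lt_top⟩
    -- properties of F
    have hFind : F = fun s => ∫ x, Set.indicator {x : EuclideanSpace ℝ (Fin 3) | x 0 ≤ s} ρ x :=
      funext fun s => (MeasureTheory.integral_indicator (hset s)).symm
    have hmeas : ∀ s : ℝ, AEStronglyMeasurable
        (Set.indicator {x : EuclideanSpace ℝ (Fin 3) | x 0 ≤ s} ρ) volume :=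
      fun s => ((hρm.indicator (hset s))).aestronglyMeasurable
    have hbd : ∀ s : ℝ, ∀ᵐ x : EuclideanSpace ℝ (Fin 3),
        ‖Set.indicator {x : EuclideanSpace ℝ (Fin 3) | x 0 ≤ s} ρ x‖ ≤ ρ x := by
      intro s
      refine Filter.Eventually.of_forall fun x => ?_
      rw [Real.norm_eq_abs, abs_of_nonneg (Set.indicator_nonneg (fun y _ => hρnn y) x)]
      exact Set.indicator_le_self' (fun y _ => hρnn y) x
    have hFcont : Continuous F := by
      rw [continuous_iff_continuousAt]
      intro t
      rw [hFind]
      refine continuousAt_of_dominated (Filter.Eventually.of_forall fun s => hmeas s) ?_ hρi ?_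
      · exact Filter.Eventually.of_forall hbd
      · filter_upwards [measure_eq_zero_iff_ae_notMem.mp (detAux_hplane t)] with x hx
        rcases lt_or_gt_of_ne (fun h => hx h) with h | h
        · refine Filter.EventuallyEq.continuousAt (y := ρ x) ?_
          filter_upwards [Ioi_mem_nhds h] with s hs
          exact Set.indicator_of_mem
            (show x ∈ {x' : EuclideanSpace ℝ (Fin 3) | x' 0 ≤ s} from
              le_of_lt (Set.mem_Ioi.mp hs)) ρ
        · refine Filter.EventuallyEq.continuousAt (y := (0:ℝ)) ?_
          filter_upwards [Iio_mem_nhds h] with s hs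
          exact Set.indicator_of_notMem
            (show x ∉ {x' : EuclideanSpace ℝ (Fin 3) | x' 0 ≤ s} from
              not_le.mpr (Set.mem_Iio.mp hs)) ρ
    have hFtop : Tendsto F atTop (𝓝 (N : ℝ)) := by
      rw [hFind, ← hρN]
      refine tendsto_integral_filter_of_dominated_convergence ρ
        (Filter.Eventually.of_forall hmeas) (Filter.Eventually.of_forall hbd) hρi ?_
      refine Filter.Eventually.of_forall fun x => ?_
      refine Tendsto.congr' ?_ tendsto_const_nhds
      filter_upwards [eventually_ge_atTop (x 0)] with s hs
      simp [Set.indicator_of_mem, Set.mem_setOf_eq, hs]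
    have hFbot : Tendsto F atBot (𝓝 0) := by
      rw [hFind]
      have : Tendsto (fun s => ∫ x, Set.indicator {x : EuclideanSpace ℝ (Fin 3) | x 0 ≤ s} ρ x)
          atBot (𝓝 (∫ _x : EuclideanSpace ℝ (Fin 3), (0:ℝ))) := by
        refine tendsto_integral_filter_of_dominated_convergence ρ
          (Filter.Eventually.of_forall hmeas) (Filter.Eventually.of_forall hbd) hρi ?_
        refine Filter.Eventually.of_forall fun x => ?_
        refine Tendsto.congr' ?_ tendsto_const_nhds
        filter_upwards [eventually_lt_atBot (x 0)] with s hs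
        simp [Set.indicator_of_notMem, Set.mem_setOf_eq, not_le.mpr hs]
      simpa using this
    have hFmono : Monotone F := by
      intro a b hab
      refine setIntegral_mono_set hρi.integrableOn
        (Filter.Eventually.of_forall fun x => hρnn x) ?_
      exact Filter.Eventually.of_forall fun x hx => le_trans hx hab
    have hF0 : ∀ t, 0 ≤ F t := fun t => setIntegral_nonneg (hset t) fun x _ => hρnn x
    have hFle : ∀ t, F t ≤ N := fun t => hFmono.ge_of_tendsto hFtop t
    have hmap : Measure.map F μ = volume.restrict (Icc 0 (N:ℝ)) :=
      detAux_cdf_map μ F N hμIic hμuniv hFcont hFmono hF0 hFle hFtop hFbot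
    -- the oscillatory factor
    set c : ℝ := ((l : ℝ) - k) * (2 * Real.pi / N) with hc
    have hcne : c ≠ 0 := by
      refine mul_ne_zero (sub_ne_zero.mpr fun h => hkl ?_) (by positivity)
      exact_mod_cast h.symm
    set g : ℝ → ℂ := fun u => Complex.exp (Complex.I * ((c * u : ℝ) : ℂ)) with hg
    have hgcont : Continuous g := by
      rw [hg]; fun_prop
    have hph : ∀ t : ℝ, ((l : ℝ) - k) * detPhase N ρ t = c * F t := by
      intro t
      simp only [detPhase, hFdef, hc]
      ring
    -- chain of integral identities
    have step1 : (∫ x, (starRingEnd ℂ) (detOrbital N ρ M S k x) * detOrbital N ρ M S l x)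
        = ((N:ℂ))⁻¹ • ∫ x, (Real.toNNReal (ρ x)) • g (F (x 0)) := by
      rw [← MeasureTheory.integral_smul]
      refine integral_congr_ae (Filter.Eventually.of_forall fun x => ?_)
      dsimp only
      rw [key x, hph (x 0), hg]
      rw [NNReal.smul_def, Real.coe_toNNReal _ (hρnn x), Complex.real_smul, smul_eq_mul]
      push_cast
      have hNne : (N:ℂ) ≠ 0 := by exact_mod_cast ne_of_gt hNpos
      field_simp
    have step2 : (∫ x, (Real.toNNReal (ρ x)) • g (F (x 0)))
        = ∫ x, g (F (x 0)) ∂ν := by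
      rw [hνdef]
      have : (fun x : EuclideanSpace ℝ (Fin 3) => ENNReal.ofReal (ρ x))
          = fun x => ((Real.toNNReal (ρ x) : NNReal) : ENNReal) := rfl
      rw [this]
      exact (integral_withDensity_eq_integral_smul hρm.real_toNNReal _).symm
    have step3 : (∫ x, g (F (x 0)) ∂ν) = ∫ t, g (F t) ∂μ := by
      rw [hμdef]
      exact (integral_map hme.aemeasurable
        ((hgcont.comp hFcont).aestronglyMeasurable)).symm
    have step4 : (∫ t, g (F t) ∂μ) = ∫ u, g u ∂(Measure.map F μ) :=
      (integral_map hFcont.measurable.aemeasurable hgcont.aestronglyMeasurable).symm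
    have step5 : (∫ u, g u ∂(Measure.map F μ)) = ∫ u in Icc (0:ℝ) N, g u := by rw [hmap]
    have step6 : (∫ u in Icc (0:ℝ) N, g u) = 0 := by
      rw [hg]
      refine detAux_osc N hNpos c hcne ?_
      have h := detAux_expone N k l hN
      rw [hc]
      convert h using 2
      push_cast
      ring
    rw [step1, step2, step3, step4, step5, step6, smul_zero]
end
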